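/- Let K be a field and let M : ℤ ⥤ ModuleCat K be a persistence module indexed by the linearly ordered set ℤ that is bounded below, i.e. there exists g₀ ∈ ℤ such that M(t) = 0 for every t < g₀. Then there exist an index set J and families (α_j)_{j∈J} in ℤ and (β_j)_{j∈J} in ℤ ∪ {∞} with α_j < β_j, such that M is isomorphic to the coproduct ⨁_{j∈J} Region(S_j), where S_j = {t ∈ ℤ : α_j ≤ t < β_j}. -/

import Mathlib

open CategoryTheory CategoryTheory.Limits Classical

noncomputable section

/-- The value of the interval module `Region S` at `t`: a copy of `K` when `t ∈ S`
and `0` otherwise, realized as a submodule of `K`. -/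
def regionCarrier (K : Type) [Field K] {G : Type} (S : Set G) (t : G) :
    Submodule K K where
  carrier := {x : K | x = 0 ∨ t ∈ S}
  zero_mem' := Or.inl rfl
  add_mem' := by
    rintro a b (rfl | h) (rfl | h)
    · exact Or.inl (by simp)
    · exact Or.inr h
    · exact Or.inr h
    · exact Or.inr h
  smul_mem' := by
    rintro c x (rfl | h)
    · exact Or.inl (by simp)
    · exact Or.inr h

/-- The structure map of the interval module: the "identity" of `K` when
`[s, t] ⊆ S` and `0` otherwise. -/
def regionMap (K : Type) [Field K] {G : Type} [LinearOrder G] (S : Set G)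
    {s t : G} (hst : s ≤ t) :
    regionCarrier K S s →ₗ[K] regionCarrier K S t :=
  if h : Set.Icc s t ⊆ S then
    { toFun := fun x => ⟨(x : K), Or.inr (h ⟨hst, le_rfl⟩)⟩
      map_add' := fun _ _ => rfl
      map_smul' := fun _ _ => rfl }
  else 0

lemma regionMap_apply_coe (K : Type) [Field K] {G : Type} [LinearOrder G]
    (S : Set G) {s t : G} (hst : s ≤ t) (x : regionCarrier K S s) :
    ((regionMap K S hst x : regionCarrier K S t) : K) =
      if Set.Icc s t ⊆ S then (x : K) else 0 := by
  by_cases h : Set.Icc s t ⊆ S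
  · rw [regionMap, dif_pos h, if_pos h]
    rfl
  · rw [regionMap, dif_neg h, if_neg h]
    rfl

/-- The interval module (region module) of a subset `S` of a linear order `G`:
the persistence module whose value at `t` is `K` if `t ∈ S` and `0` otherwise, with
structure map for `s ≤ t` the identity of `K` when `[s, t] ⊆ S` and `0` otherwise. -/
def Region (K : Type) [Field K] {G : Type} [LinearOrder G] (S : Set G) :
    G ⥤ ModuleCat.{0} K where
  obj t := ModuleCat.of K (regionCarrier K S t)
  map {s t} f := ModuleCat.ofHom (regionMap K S (leOfHom f))
  map_id := by
    intro t
    apply ModuleCat.hom_ext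
    apply LinearMap.ext
    intro x
    change regionMap K S (le_refl t) x = x
    apply Subtype.ext
    rw [regionMap_apply_coe]
    by_cases h : Set.Icc t t ⊆ S
    · rw [if_pos h]
    · have ht : t ∉ S := fun hts => h (by rw [Set.Icc_self]; simpa using hts)
      rw [if_neg h]
      rcases x.2 with hx | hx
      · exact hx.symm
      · exact absurd hx ht
  map_comp := by
    intro s t u f g
    have hst : s ≤ t := leOfHom f
    have htu : t ≤ u := leOfHom g
    apply ModuleCat.hom_ext
    apply LinearMap.ext
    intro x
    change regionMap K S (hst.trans htu) x = regionMap K S htu (regionMap K S hst x)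
    apply Subtype.ext
    rw [regionMap_apply_coe, regionMap_apply_coe, regionMap_apply_coe]
    by_cases h1 : Set.Icc s u ⊆ S
    · have h2 : Set.Icc s t ⊆ S := fun v hv => h1 ⟨hv.1, hv.2.trans htu⟩
      have h3 : Set.Icc t u ⊆ S := fun v hv => h1 ⟨hst.trans hv.1, hv.2⟩
      rw [if_pos h1, if_pos h2, if_pos h3]
    · rw [if_neg h1]
      by_cases h3 : Set.Icc t u ⊆ S
      · have h2 : ¬ Set.Icc s t ⊆ S := by
          intro h2
          exact h1 fun v hv => by
            rcases le_total v t with hvt | htv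
            · exact h2 ⟨hv.1, hvt⟩
            · exact h3 ⟨htv, hv.2⟩
        rw [if_pos h3, if_neg h2]
      · rw [if_neg h3]

end
namespace PMDecomp

open CategoryTheory CategoryTheory.Limits Classical

noncomputable section

variable {K : Type} [Field K] (M : ℤ ⥤ ModuleCat.{0} K)

/-- structure map -/
def φm {s t : ℤ} (h : s ≤ t) : M.obj s ⟶ M.obj t := M.map (homOfLE h)

lemma φm_comp {s t u : ℤ} (h1 : s ≤ t) (h2 : t ≤ u) (x : M.obj s) :
    φm M h2 (φm M h1 x) = φm M (h1.trans h2) x := by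
  have : φm M h1 ≫ φm M h2 = φm M (h1.trans h2) := by
    rw [φm, φm, φm, ← M.map_comp]; rfl
  rw [← this]; rfl

lemma φm_self {t : ℤ} (h : t ≤ t) (x : M.obj t) : φm M h x = x := by
  have : φm M h = 𝟙 (M.obj t) := by
    rw [φm]
    have : homOfLE h = 𝟙 t := rfl
    rw [this, M.map_id]
  rw [this]; rfl

/-- death time of `v` living in `M.obj a`. -/
def death (a : ℤ) (v : M.obj a) : WithTop ℤ :=
  if h : ∃ n : ℕ, φm M (by omega : a ≤ a + 1 + (n : ℤ)) v = 0
  then ((a + 1 + (Nat.find h : ℤ) : ℤ) : WithTop ℤ) else ⊤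

lemma vanish_mono {a u u' : ℤ} (h : a ≤ u) (h2 : u ≤ u') {v : M.obj a}
    (hv : φm M h v = 0) : φm M (h.trans h2) v = 0 := by
  rw [← φm_comp M h h2, hv, map_zero]

lemma death_gt (a : ℤ) (v : M.obj a) : (a : WithTop ℤ) < death M a v := by
  rw [death]
  split
  · rw [WithTop.coe_lt_coe]; omega
  · exact WithTop.coe_lt_top a

lemma φm_zero_congr {a u u' : ℤ} (h : a ≤ u) (h' : a ≤ u') (e : u = u') (v : M.obj a) :
    φm M h v = 0 ↔ φm M h' v = 0 := by subst e; rfl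

lemma death_le_iff {a u : ℤ} (h : a < u) (v : M.obj a) :
    death M a v ≤ (u : WithTop ℤ) ↔ φm M h.le v = 0 := by
  rw [death]
  split
  case isTrue hex =>
    rw [WithTop.coe_le_coe]
    constructor
    · intro hle
      have h0 := Nat.find_spec hex
      exact vanish_mono M _ (by omega) h0
    · intro h0
      have hfind : Nat.find hex ≤ (u - a - 1).toNat := by
        apply Nat.find_le
        rw [φm_zero_congr M _ h.le (by omega : a + 1 + ((u - a - 1).toNat : ℤ) = u)]
        exact h0
      omega
  case isFalse hex =>
    simp only [top_le_iff, WithTop.coe_ne_top, false_iff]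
    intro h0
    exact hex ⟨(u - a - 1).toNat, by
      rw [φm_zero_congr M _ h.le (by omega : a + 1 + ((u - a - 1).toNat : ℤ) = u)]
      exact h0⟩

lemma vanish_of_death_le {a u : ℤ} (h : a ≤ u) (v : M.obj a)
    (hd : death M a v ≤ (u : WithTop ℤ)) : φm M h v = 0 := by
  have hlt : a < u := by
    have := death_gt M a v
    have := lt_of_lt_of_le this hd
    exact_mod_cast this
  exact (death_le_iff M hlt v).mp hd

/-- generators -/
abbrev Gen : Type := Σ t : ℤ, M.obj t

def gdeath (g : Gen M) : WithTop ℤ := death M g.1 g.2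

def pushTo (u : ℤ) (g : Gen M) : M.obj u :=
  if h : g.1 ≤ u then φm M h g.2 else 0

lemma pushTo_of_le {u : ℤ} {g : Gen M} (h : g.1 ≤ u) : pushTo M u g = φm M h g.2 :=
  dif_pos h

lemma pushTo_self (g : Gen M) : pushTo M g.1 g = g.2 := by
  rw [pushTo_of_le M le_rfl, φm_self]

lemma push_push {u u' : ℤ} (h : u ≤ u') {g : Gen M} (hb : g.1 ≤ u) :
    φm M h (pushTo M u g) = pushTo M u' g := by
  rw [pushTo_of_le M hb, pushTo_of_le M (hb.trans h), φm_comp]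

lemma pushTo_eq_zero_of_death_le {u : ℤ} {g : Gen M}
    (hd : gdeath M g ≤ (u : WithTop ℤ)) : pushTo M u g = 0 := by
  have hlt : g.1 < u := by
    have := lt_of_lt_of_le (death_gt M g.1 g.2) hd
    exact_mod_cast this
  rw [pushTo_of_le M hlt.le]
  exact vanish_of_death_le M hlt.le g.2 hd

end

end PMDecomp
namespace PMDecomp

open CategoryTheory CategoryTheory.Limits Classical

noncomputable section

variable {K : Type} [Field K] (M : ℤ ⥤ ModuleCat.{0} K)

/-- finite combination of elements of `M.obj T` -/
def scomb {T : ℤ} (d : M.obj T →₀ K) : M.obj T := d.sum fun b k => k • b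

def IndepSet (T : ℤ) (B : Set (M.obj T)) : Prop :=
  ∀ d : M.obj T →₀ K, ↑d.support ⊆ B → scomb M d = 0 → d = 0

def AdaptedSet (T : ℤ) (B : Set (M.obj T)) : Prop :=
  ∀ u : ℤ, ∀ hu : T < u, ∀ d : M.obj T →₀ K, ↑d.support ⊆ B →
    φm M hu.le (scomb M d) = 0 → ∀ b ∈ d.support, φm M hu.le b = 0

lemma exists_min_withTop (S : Set (WithTop ℤ)) (hne : S.Nonempty) (b : ℤ)
    (hb : ∀ x ∈ S, (b : WithTop ℤ) ≤ x) : ∃ m ∈ S, ∀ x ∈ S, m ≤ x := by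
  by_cases hz : ∃ z : ℤ, (z : WithTop ℤ) ∈ S
  · obtain ⟨lb, hlb, hleast⟩ := Int.exists_least_of_bdd (P := fun z => (z : WithTop ℤ) ∈ S)
      ⟨b, fun z hzS => by exact_mod_cast hb _ hzS⟩ hz
    refine ⟨lb, hlb, fun x hx => ?_⟩
    cases x with
    | top => exact le_top
    | coe z => exact_mod_cast hleast z hx
  · obtain ⟨x, hx⟩ := hne
    cases x with
    | top => exact ⟨⊤, hx, fun y hy => by
        cases y with
        | top => exact le_rfl
        | coe z => exact absurd hy (fun h => hz ⟨z, h⟩)⟩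
    | coe z => exact absurd hx (fun h => hz ⟨z, h⟩)

lemma coe_add_one_le_of_lt {a : ℤ} {x : WithTop ℤ} (h : (a : WithTop ℤ) < x) :
    ((a + 1 : ℤ) : WithTop ℤ) ≤ x := by
  cases x with
  | top => exact le_top
  | coe z =>
    have : a < z := WithTop.coe_lt_coe.mp h
    exact WithTop.coe_le_coe.mpr (by omega)

lemma scomb_mem_span {T : ℤ} (d : M.obj T →₀ K) (B : Set (M.obj T))
    (hd : ↑d.support ⊆ B) : scomb M d ∈ Submodule.span K B := by
  rw [scomb]
  apply Submodule.sum_mem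
  intro b hbmem
  exact Submodule.smul_mem _ _ (Submodule.subset_span (hd hbmem))

/-- key extension lemma: any adapted independent set extends to an adapted
independent spanning set. -/
theorem lemmaB (T : ℤ) (B₀ : Set (M.obj T)) (h0i : IndepSet M T B₀)
    (h0a : AdaptedSet M T B₀) :
    ∃ B : Set (M.obj T), B₀ ⊆ B ∧ IndepSet M T B ∧ AdaptedSet M T B ∧
      Submodule.span K B = ⊤ := by
  set 𝒮 : Set (Set (M.obj T)) := {B | B₀ ⊆ B ∧ IndepSet M T B ∧ AdaptedSet M T B} with h𝒮
  -- chains have upper bounds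
  have hchain : ∀ c ⊆ 𝒮, IsChain (· ⊆ ·) c → c.Nonempty → ∃ ub ∈ 𝒮, ∀ s ∈ c, s ⊆ ub := by
    intro c hc hchain hne
    refine ⟨⋃₀ c, ⟨?_, ?_, ?_⟩, fun s hs => Set.subset_sUnion_of_mem hs⟩
    · obtain ⟨s, hs⟩ := hne
      exact (hc hs).1.trans (Set.subset_sUnion_of_mem hs)
    · intro d hd hsum
      obtain ⟨B, hB, hdB⟩ := DirectedOn.exists_mem_subset_of_finset_subset_biUnion
        hne hchain.directedOn (f := id) (by rwa [Set.sUnion_eq_biUnion] at hd)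
      exact (hc hB).2.1 d hdB hsum
    · intro u hu d hd hzero
      obtain ⟨B, hB, hdB⟩ := DirectedOn.exists_mem_subset_of_finset_subset_biUnion
        hne hchain.directedOn (f := id) (by rwa [Set.sUnion_eq_biUnion] at hd)
      exact (hc hB).2.2 u hu d hdB hzero
  obtain ⟨B, hB₀B, hBmax⟩ := zorn_subset_nonempty 𝒮 hchain B₀ ⟨le_rfl, h0i, h0a⟩
  obtain ⟨-, hBi, hBa⟩ := hBmax.prop
  have hB₀B : B₀ ⊆ B := hBmax.prop.1
  refine ⟨B, hB₀B, hBi, hBa, ?_⟩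
  by_contra hspan
  -- pick v outside the span
  have : ∃ v : M.obj T, v ∉ Submodule.span K B := by
    by_contra h
    push_neg at h
    exact hspan (top_unique fun x _ => h x)
  obtain ⟨v, hv⟩ := this
  -- choose v' in the coset v + span B with minimal death
  obtain ⟨m, ⟨v', hv', hm⟩, hmin⟩ := exists_min_withTop
    ((fun w => death M T w) '' {w | w - v ∈ Submodule.span K B})
    ⟨death M T v, ⟨v, by simp, rfl⟩⟩ (T + 1)
    (by
      rintro x ⟨w, -, rfl⟩
      exact coe_add_one_le_of_lt (death_gt M T w))
  -- v' ∉ span B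
  have hv'span : v' ∉ Submodule.span K B := by
    intro h
    apply hv
    have := Submodule.sub_mem _ h hv'
    simpa using this
  have hv'B : v' ∉ B := fun h => hv'span (Submodule.subset_span h)
  -- show insert v' B ∈ 𝒮
  have hins : insert v' B ∈ 𝒮 := by
    refine ⟨hB₀B.trans (Set.subset_insert _ _), ?_, ?_⟩
    · -- independence
      intro d hd hsum
      by_cases hc : d v' = 0
      · apply hBi d _ hsum
        intro b hbmem
        rcases hd hbmem with rfl | hbB
        · exact absurd hc (Finsupp.mem_support_iff.mp hbmem)
        · exact hbB
      · exfalso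
        apply hv'span
        -- v' = -(d v')⁻¹ • (scomb of d.erase v')
        have hsplit : scomb M d = d v' • v' + scomb M (d.erase v') := by
          rw [scomb, scomb, Finsupp.sum, Finsupp.sum]
          rw [Finsupp.support_erase]
          rw [← Finset.add_sum_erase _ _ (Finsupp.mem_support_iff.mpr hc)]
          congr 1
          apply Finset.sum_congr rfl
          intro b hbmem
          rw [Finsupp.erase_ne (Finset.ne_of_mem_erase hbmem)]
        have h2 : scomb M (d.erase v') ∈ Submodule.span K B := by
          apply scomb_mem_span
          intro b hbmem
          rw [Finsupp.support_erase] at hbmem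
          rcases hd (Finset.mem_of_mem_erase hbmem) with rfl | hbB
          · exact absurd rfl (Finset.ne_of_mem_erase hbmem)
          · exact hbB
        have h1 : d v' • v' = -scomb M (d.erase v') := by
          rw [hsum] at hsplit
          linear_combination (norm := module) -hsplit
        have hrw : v' = (d v')⁻¹ • (d v' • v') := by
          rw [smul_smul, inv_mul_cancel₀ hc, one_smul]
        rw [hrw, h1]
        exact Submodule.smul_mem _ _ (Submodule.neg_mem _ h2)
    · -- adaptedness
      intro u hu d hd hzero b hbmem
      by_cases hc : d v' = 0
      · have hdB : ↑d.support ⊆ B := by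
          intro b' hb'
          rcases hd hb' with rfl | hbB
          · exact absurd hc (Finsupp.mem_support_iff.mp hb')
          · exact hbB
        exact hBa u hu d hdB hzero b hbmem
      · -- the combination involves v'
        have hsplit : scomb M d = d v' • v' + scomb M (d.erase v') := by
          rw [scomb, scomb, Finsupp.sum, Finsupp.sum]
          rw [Finsupp.support_erase]
          rw [← Finset.add_sum_erase _ _ (Finsupp.mem_support_iff.mpr hc)]
          congr 1
          apply Finset.sum_congr rfl
          intro b' hb'
          rw [Finsupp.erase_ne (Finset.ne_of_mem_erase hb')]
        have heraseB : ↑(d.erase v').support ⊆ B := by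
          intro b' hb'
          rw [Finsupp.support_erase] at hb'
          rcases hd (Finset.mem_of_mem_erase hb') with rfl | hbB
          · exact absurd rfl (Finset.ne_of_mem_erase hb')
          · exact hbB
        -- v'' := v' + (d v')⁻¹ • scomb (d.erase v') is killed by φm
        set w := scomb M (d.erase v') with hw
        have hv'' : φm M hu.le (v' + (d v')⁻¹ • w) = 0 := by
          have := congrArg (fun x => (d v')⁻¹ • φm M hu.le x) hsplit
          simp only [map_add, map_smul, smul_add, smul_smul,
            inv_mul_cancel₀ hc, one_smul, smul_zero] at this
          rw [hzero] at this
          simp only [smul_zero] at this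
          rw [map_add, map_smul]
          exact this.symm
        -- so death (v' + c⁻¹ w) ≤ u, hence death v' ≤ u by minimality
        have hmem : death M T (v' + (d v')⁻¹ • w) ∈
            (fun w => death M T w) '' {w | w - v ∈ Submodule.span K B} := by
          refine ⟨_, ?_, rfl⟩
          have h1 : v' - v ∈ Submodule.span K B := hv'
          have h2 : (d v')⁻¹ • w ∈ Submodule.span K B :=
            Submodule.smul_mem _ _ (scomb_mem_span M _ _ heraseB)
          have := Submodule.add_mem _ h1 h2
          simpa [sub_add_eq_add_sub] using this
        have hd'' : death M T (v' + (d v')⁻¹ • w) ≤ (u : WithTop ℤ) :=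
          (death_le_iff M hu _).mpr hv''
        have hmv' : death M T v' = m := hm
        have hdv' : death M T v' ≤ (u : WithTop ℤ) := by
          rw [hmv']
          exact le_trans (hmin _ hmem) hd''
        have hφv' : φm M hu.le v' = 0 := (death_le_iff M hu v').mp hdv'
        -- then w is killed too, so B-adaptedness applies to erase part
        have hφw : φm M hu.le w = 0 := by
          have := congrArg (φm M hu.le) hsplit
          rw [hzero, map_add, map_smul, hφv', smul_zero, zero_add] at this
          exact this.symm
        rcases hd hbmem with rfl | hbB
        · exact hφv'
        · rcases eq_or_ne b v' with rfl | hbv'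
          · exact hφv'
          · apply hBa u hu (d.erase v') heraseB hφw
            rw [Finsupp.support_erase, Finset.mem_erase]
            exact ⟨hbv', hbmem⟩
  -- contradiction with maximality
  exact hv'B (hBmax.2 hins (Set.subset_insert _ _) (Set.mem_insert v' B))

end

end PMDecomp
namespace PMDecomp

open CategoryTheory CategoryTheory.Limits Classical

noncomputable section

variable {K : Type} [Field K] (M : ℤ ⥤ ModuleCat.{0} K)

/-- linear combination of pushforwards of generators -/
def lc (u : ℤ) : (Gen M →₀ K) →ₗ[K] M.obj u :=
  Finsupp.linearCombination K (pushTo M u)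

lemma lc_apply (u : ℤ) (c : Gen M →₀ K) :
    lc M u c = c.sum fun g k => k • pushTo M u g :=
  Finsupp.linearCombination_apply _ _

lemma scomb_eq {T : ℤ} (d : M.obj T →₀ K) :
    scomb M d = Finsupp.linearCombination K (fun b => b) d := by
  rw [scomb, Finsupp.linearCombination_apply]

def alive (G : Set (Gen M)) (t : ℤ) : Set (Gen M) :=
  {g | g ∈ G ∧ g.1 ≤ t ∧ (t : WithTop ℤ) < gdeath M g}

structure Inv (T : ℤ) (G : Set (Gen M)) : Prop where
  birth_le : ∀ g ∈ G, g.1 ≤ T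
  indep : ∀ u ≤ T, ∀ c : Gen M →₀ K, ↑c.support ⊆ alive M G u → lc M u c = 0 → c = 0
  spans : ∀ u ≤ T, ∀ x : M.obj u, ∃ c : Gen M →₀ K,
    ↑c.support ⊆ alive M G u ∧ lc M u c = x
  adapted : ∀ u : ℤ, ∀ hu : T < u, ∀ c : Gen M →₀ K, ↑c.support ⊆ alive M G T →
    φm M hu.le (lc M T c) = 0 → ∀ g ∈ c.support, gdeath M g ≤ (u : WithTop ℤ)

lemma alive_empty (t : ℤ) : alive M (∅ : Set (Gen M)) t = ∅ := by
  ext g; simp [alive]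

lemma inv_base (g₀ : ℤ) (hbdd : ∀ t : ℤ, t < g₀ → ∀ v : M.obj t, v = 0) :
    Inv M (g₀ - 1) (∅ : Set (Gen M)) := by
  constructor
  · intro g hg; exact absurd hg (Set.notMem_empty g)
  · intro u hu c hc _
    rw [alive_empty] at hc
    have : c.support = ∅ := by
      rw [← Finset.coe_empty] at hc
      exact Finset.subset_empty.mp (Finset.coe_subset.mp hc)
    exact Finsupp.support_eq_empty.mp this
  · intro u hu x
    refine ⟨0, by simp, ?_⟩
    rw [map_zero]
    exact (hbdd u (by omega) x).symm
  · intro u hu c hc _ g hg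
    rw [alive_empty] at hc
    exact absurd (hc hg) (Set.notMem_empty g)

lemma lc_push (u u' : ℤ) (h : u ≤ u') (c : Gen M →₀ K)
    (hc : ∀ g ∈ c.support, g.1 ≤ u) :
    φm M h (lc M u c) = lc M u' c := by
  rw [lc_apply, lc_apply, Finsupp.sum, Finsupp.sum, map_sum]
  apply Finset.sum_congr rfl
  intro g hg
  rw [map_smul]
  congr 1
  exact push_push M h (hc g hg)

end

end PMDecomp
namespace PMDecomp

open CategoryTheory CategoryTheory.Limits Classical

noncomputable section

variable {K : Type} [Field K] (M : ℤ ⥤ ModuleCat.{0} K)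

lemma inv_step (T : ℤ) (G : Set (Gen M)) (hG : Inv M T G) :
    ∃ G' : Set (Gen M), G ⊆ G' ∧ Inv M (T + 1) G' ∧ ∀ g ∈ G', g ∉ G → g.1 = T + 1 := by
  classical
  set A' := alive M G (T + 1) with hA'
  have hA'sub : A' ⊆ alive M G T := by
    rintro g ⟨hgG, -, hgd⟩
    exact ⟨hgG, hG.birth_le g hgG,
      lt_trans (WithTop.coe_lt_coe.mpr (by omega : T < T + 1)) hgd⟩
  have hbirth' : ∀ g ∈ A', g.1 ≤ T := fun g hg => hG.birth_le g hg.1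
  -- (*) key: combinations over A' pushed to T+1 vanish only trivially
  have hstar : ∀ c : Gen M →₀ K, ↑c.support ⊆ A' → lc M (T+1) c = 0 → c = 0 := by
    intro c hc h0
    have hb : ∀ g ∈ c.support, g.1 ≤ T := fun g hg => hbirth' g (hc hg)
    have hp : φm M (by omega : T ≤ T+1) (lc M T c) = 0 := by
      rw [lc_push M T (T+1) (by omega) c hb]; exact h0
    have hdead := hG.adapted (T+1) (by omega) c (fun g hg => hA'sub (hc hg)) hp
    by_contra hcne
    obtain ⟨g, hg⟩ := Finsupp.support_nonempty_iff.mpr hcne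
    exact absurd (hdead g hg) (not_le.mpr (hc hg).2.2)
  -- injectivity of pushTo (T+1) on A'
  have hinj : Set.InjOn (pushTo M (T+1)) A' := by
    intro g hg g' hg' heq
    by_contra hne
    have hsupp : ↑(Finsupp.single g (1:K) - Finsupp.single g' 1).support ⊆ A' := by
      intro x hx
      have hx' := Finsupp.support_sub hx
      rw [Finset.mem_union] at hx'
      rcases hx' with h | h
      · rw [Finsupp.support_single_ne_zero _ one_ne_zero, Finset.mem_singleton] at h
        subst h; exact hg
      · rw [Finsupp.support_single_ne_zero _ one_ne_zero, Finset.mem_singleton] at h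
        subst h; exact hg'
    have h0 : lc M (T+1) (Finsupp.single g (1:K) - Finsupp.single g' 1) = 0 := by
      rw [map_sub]
      rw [lc, Finsupp.linearCombination_single, Finsupp.linearCombination_single]
      rw [one_smul, one_smul, heq, sub_self]
    have hc0 := hstar _ hsupp h0
    have h1 := DFunLike.congr_fun hc0 g
    rw [Finsupp.sub_apply, Finsupp.single_eq_same,
      Finsupp.single_eq_of_ne' (Ne.symm hne), sub_zero] at h1
    simp at h1
  set B₀ : Set (M.obj (T+1)) := pushTo M (T+1) '' A' with hB₀
  -- the section picking a generator for each basis vector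
  set sec : M.obj (T+1) → Gen M := fun b =>
    if h : ∃ g ∈ A', pushTo M (T+1) g = b then h.choose else ⟨T+1, b⟩ with hsec
  have hsec_mem : ∀ b ∈ B₀, sec b ∈ A' := by
    intro b hb
    obtain ⟨g, hgA, hgp⟩ := hb
    rw [hsec]
    simp only
    rw [dif_pos ⟨g, hgA, hgp⟩]
    exact (Exists.choose_spec (⟨g, hgA, hgp⟩ : ∃ g ∈ A', pushTo M (T+1) g = b)).1
  have hsec_push : ∀ b ∈ B₀, pushTo M (T+1) (sec b) = b := by
    intro b hb
    obtain ⟨g, hgA, hgp⟩ := hb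
    rw [hsec]
    simp only
    rw [dif_pos ⟨g, hgA, hgp⟩]
    exact (Exists.choose_spec (⟨g, hgA, hgp⟩ : ∃ g ∈ A', pushTo M (T+1) g = b)).2
  have hsec_new : ∀ b : M.obj (T+1), b ∉ B₀ → sec b = ⟨T+1, b⟩ := by
    intro b hb
    rw [hsec]
    simp only
    rw [dif_neg]
    rintro ⟨g, hgA, hgp⟩
    exact hb ⟨g, hgA, hgp⟩
  have hsec_inj : Set.InjOn sec B₀ := by
    intro b hb b' hb' heq
    rw [← hsec_push b hb, ← hsec_push b' hb', heq]
  -- pushing a mapDomain combination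
  have hmapd : ∀ c : Gen M →₀ K,
      scomb M (Finsupp.mapDomain (pushTo M (T+1)) c) = lc M (T+1) c := by
    intro c
    rw [scomb, lc_apply]
    exact Finsupp.sum_mapDomain_index (fun b => zero_smul K b)
      (fun b m1 m2 => add_smul m1 m2 b)
  have hlcsec : ∀ (S : Set (M.obj (T+1))), (∀ b ∈ S, pushTo M (T+1) (sec b) = b) →
      ∀ d : M.obj (T+1) →₀ K, ↑d.support ⊆ S →
      lc M (T+1) (Finsupp.mapDomain sec d) = scomb M d := by
    intro S hS d hd
    rw [lc_apply, scomb]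
    rw [Finsupp.sum_mapDomain_index (fun g => zero_smul K (pushTo M (T+1) g))
      (fun g m1 m2 => add_smul m1 m2 (pushTo M (T+1) g))]
    apply Finsupp.sum_congr
    intro b hb
    rw [hS b (hd hb)]
  -- B₀ is independent
  have h0i : IndepSet M (T+1) B₀ := by
    intro d hd hsum
    have hcsupp : ↑(Finsupp.mapDomain sec d).support ⊆ A' := by
      intro g hg
      obtain ⟨b, hb, rfl⟩ := Finset.mem_image.mp (Finsupp.mapDomain_support hg)
      exact hsec_mem b (hd hb)
    have hlc : lc M (T+1) (Finsupp.mapDomain sec d) = 0 := by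
      rw [hlcsec B₀ hsec_push d hd]; exact hsum
    have hc0 := hstar _ hcsupp hlc
    ext b
    by_cases hb : b ∈ d.support
    · have := Finsupp.mapDomain_apply' B₀ d hd hsec_inj (hd hb)
      rw [hc0] at this
      simpa using this.symm
    · simpa using Finsupp.notMem_support_iff.mp hb
  -- B₀ is adapted
  have h0a : AdaptedSet M (T+1) B₀ := by
    intro u hu d hd hzero b hb
    set c := Finsupp.mapDomain sec d with hcdef
    have hcsupp : ↑c.support ⊆ A' := by
      intro g hg
      obtain ⟨b', hb', rfl⟩ := Finset.mem_image.mp (Finsupp.mapDomain_support hg)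
      exact hsec_mem b' (hd hb')
    have hcb : ∀ g ∈ c.support, g.1 ≤ T := fun g hg => hbirth' g (hcsupp hg)
    have hTu : T < u := by omega
    have h1 : φm M hTu.le (lc M T c) = 0 := by
      have e1 : φm M (by omega : T ≤ T+1) (lc M T c) = lc M (T+1) c :=
        lc_push M T (T+1) (by omega) c hcb
      have e2 : lc M (T+1) c = scomb M d := hlcsec B₀ hsec_push d hd
      calc φm M hTu.le (lc M T c)
          = φm M hu.le (φm M (by omega : T ≤ T+1) (lc M T c)) := by
            rw [φm_comp]
        _ = φm M hu.le (scomb M d) := by rw [e1, e2]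
        _ = 0 := hzero
    have hdead := hG.adapted u hTu c (fun g hg => hA'sub (hcsupp hg)) h1
    have hgb : c (sec b) = d b := Finsupp.mapDomain_apply' B₀ d hd hsec_inj (hd hb)
    have hgsupp : sec b ∈ c.support := by
      rw [Finsupp.mem_support_iff, hgb]
      exact Finsupp.mem_support_iff.mp hb
    have hd1 : gdeath M (sec b) ≤ (u : WithTop ℤ) := hdead _ hgsupp
    have : φm M hu.le b = φm M hu.le (pushTo M (T+1) (sec b)) := by
      rw [hsec_push b (hd hb)]
    rw [this, push_push M hu.le ((hbirth' _ (hsec_mem b (hd hb))).trans (by omega))]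
    exact pushTo_eq_zero_of_death_le M hd1
  -- extend to a full adapted basis
  obtain ⟨B, hB₀B, hBi, hBa, hBspan⟩ := lemmaB M (T+1) B₀ h0i h0a
  set newG : Set (Gen M) := (fun w => (⟨T+1, w⟩ : Gen M)) '' (B \ B₀) with hnewG
  set G' : Set (Gen M) := G ∪ newG with hG'
  have hnew_birth : ∀ g ∈ newG, g.1 = T + 1 := by
    rintro g ⟨w, -, rfl⟩; rfl
  have halive_low : ∀ u : ℤ, u ≤ T → alive M G' u = alive M G u := by
    intro u hu
    ext g
    constructor
    · rintro ⟨hgG', hgb, hgd⟩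
      rcases hgG' with h | h
      · exact ⟨h, hgb, hgd⟩
      · exact absurd hgb (by rw [hnew_birth g h]; omega)
    · rintro ⟨hgG, hgb, hgd⟩
      exact ⟨Or.inl hgG, hgb, hgd⟩
  have halive_top : alive M G' (T+1) = A' ∪ newG := by
    ext g
    constructor
    · rintro ⟨hgG', hgb, hgd⟩
      rcases hgG' with h | h
      · exact Or.inl ⟨h, hgb, hgd⟩
      · exact Or.inr h
    · rintro (h | h)
      · exact ⟨Or.inl h.1, h.2.1, h.2.2⟩
      · refine ⟨Or.inr h, le_of_eq (hnew_birth g h), ?_⟩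
        rw [← hnew_birth g h]
        exact death_gt M g.1 g.2
  -- pushforward bijection at T+1
  have hpush_new : ∀ w : M.obj (T+1), pushTo M (T+1) (⟨T+1, w⟩ : Gen M) = w :=
    fun w => pushTo_self M ⟨T+1, w⟩
  have hpush_mem : ∀ g ∈ alive M G' (T+1), pushTo M (T+1) g ∈ B := by
    intro g hg
    rw [halive_top] at hg
    rcases hg with h | h
    · exact hB₀B ⟨g, h, rfl⟩
    · obtain ⟨w, hw, rfl⟩ := h
      dsimp only
      rw [hpush_new]
      exact hw.1
  have hinj' : Set.InjOn (pushTo M (T+1)) (alive M G' (T+1)) := by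
    rw [halive_top]
    rintro g hg g' hg' heq
    rcases hg with h | h <;> rcases hg' with h' | h'
    · exact hinj h h' heq
    · exfalso
      obtain ⟨w, hw, rfl⟩ := h'
      dsimp only at heq
      rw [hpush_new] at heq
      exact hw.2 (heq ▸ ⟨g, h, rfl⟩)
    · exfalso
      obtain ⟨w, hw, rfl⟩ := h
      dsimp only at heq
      rw [hpush_new] at heq
      exact hw.2 (heq.symm ▸ ⟨g', h', rfl⟩)
    · obtain ⟨w, hw, rfl⟩ := h
      obtain ⟨w', hw', rfl⟩ := h'
      dsimp only at heq ⊢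
      rw [hpush_new, hpush_new] at heq
      subst heq; rfl
  have hsec_mem' : ∀ b ∈ B, sec b ∈ alive M G' (T+1) := by
    intro b hb
    rw [halive_top]
    by_cases h : b ∈ B₀
    · exact Or.inl (hsec_mem b h)
    · rw [hsec_new b h]
      exact Or.inr ⟨b, ⟨hb, h⟩, rfl⟩
  have hsec_push' : ∀ b ∈ B, pushTo M (T+1) (sec b) = b := by
    intro b hb
    by_cases h : b ∈ B₀
    · exact hsec_push b h
    · rw [hsec_new b h]
      exact hpush_new b
  refine ⟨G', Set.subset_union_left, ?_, ?_⟩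
  · constructor
    · -- birth_le
      rintro g (h | h)
      · exact (hG.birth_le g h).trans (by omega)
      · exact le_of_eq (hnew_birth g h)
    · -- indep
      intro u hu c hc h0
      rcases lt_or_eq_of_le hu with h | h
      · have hu' : u ≤ T := by omega
        rw [halive_low u hu'] at hc
        exact hG.indep u hu' c hc h0
      · subst h
        set d := Finsupp.mapDomain (pushTo M (T+1)) c with hddef
        have hdsupp : ↑d.support ⊆ B := by
          intro b hb
          obtain ⟨g, hg, rfl⟩ := Finset.mem_image.mp (Finsupp.mapDomain_support hb)
          exact hpush_mem g (hc hg)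
        have hd0 : scomb M d = 0 := by rw [hmapd]; exact h0
        have := hBi d hdsupp hd0
        ext g
        by_cases hg : g ∈ c.support
        · have happ2 : d (pushTo M (T+1) g) = c g :=
            Finsupp.mapDomain_apply' (alive M G' (T+1)) c hc hinj' (hc hg)
          rw [this] at happ2
          simpa using happ2.symm
        · simpa using Finsupp.notMem_support_iff.mp hg
    · -- spans
      intro u hu x
      rcases lt_or_eq_of_le hu with h | h
      · have hu' : u ≤ T := by omega
        obtain ⟨c, hc, hlc⟩ := hG.spans u hu' x
        exact ⟨c, by rw [halive_low u hu']; exact hc, hlc⟩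
      · subst h
        have hx : x ∈ Submodule.span K B := by rw [hBspan]; trivial
        obtain ⟨d, hd, hdx⟩ := Submodule.mem_span_set.mp hx
        refine ⟨Finsupp.mapDomain sec d, ?_, ?_⟩
        · intro g hg
          obtain ⟨b, hb, rfl⟩ := Finset.mem_image.mp (Finsupp.mapDomain_support hg)
          exact hsec_mem' b (hd hb)
        · rw [hlcsec B hsec_push' d hd]
          exact hdx
    · -- adapted
      intro u hu c hc h0 g hg
      set d := Finsupp.mapDomain (pushTo M (T+1)) c with hddef
      have hdsupp : ↑d.support ⊆ B := by
        intro b hb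
        obtain ⟨g', hg', rfl⟩ := Finset.mem_image.mp (Finsupp.mapDomain_support hb)
        exact hpush_mem g' (hc hg')
      have hd0 : φm M hu.le (scomb M d) = 0 := by rw [hmapd]; exact h0
      have hb := hBa u hu d hdsupp hd0
      have happ2 : d (pushTo M (T+1) g) = c g :=
        Finsupp.mapDomain_apply' (alive M G' (T+1)) c hc hinj' (hc hg)
      have hdg : pushTo M (T+1) g ∈ d.support := by
        rw [Finsupp.mem_support_iff, happ2]
        exact Finsupp.mem_support_iff.mp hg
      have h2 : φm M hu.le (pushTo M (T+1) g) = 0 := hb _ hdg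
      have hgb : g.1 ≤ T + 1 := (hc hg).2.1
      rw [push_push M hu.le hgb] at h2
      have hglt : g.1 < u := by omega
      rw [gdeath, death_le_iff M hglt]
      rw [pushTo_of_le M hglt.le] at h2
      exact h2
  · rintro g (h | h) hgG
    · exact absurd h hgG
    · exact hnew_birth g h

end

end PMDecomp
namespace PMDecomp

open CategoryTheory CategoryTheory.Limits Classical

noncomputable section

variable {K : Type} [Field K] (M : ℤ ⥤ ModuleCat.{0} K)

def stateP (g₀ : ℤ) (hbdd : ∀ t : ℤ, t < g₀ → ∀ v : M.obj t, v = 0) :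
    ∀ n : ℕ, {G : Set (Gen M) // Inv M (g₀ - 1 + n) G}
  | 0 => ⟨∅, by simpa using inv_base M g₀ hbdd⟩
  | n+1 => ⟨(inv_step M (g₀ - 1 + n) (stateP g₀ hbdd n).1 (stateP g₀ hbdd n).2).choose, by
      have h := (inv_step M (g₀ - 1 + n) (stateP g₀ hbdd n).1 (stateP g₀ hbdd n).2).choose_spec
      have e : (g₀ - 1 + ((n+1 : ℕ) : ℤ) : ℤ) = (g₀ - 1 + n) + 1 := by push_cast; ring
      rw [e]
      exact h.2.1⟩

lemma stateP_subset (g₀ : ℤ) (hbdd : ∀ t : ℤ, t < g₀ → ∀ v : M.obj t, v = 0) (n : ℕ) :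
    (stateP M g₀ hbdd n).1 ⊆ (stateP M g₀ hbdd (n+1)).1 :=
  (inv_step M (g₀ - 1 + n) (stateP M g₀ hbdd n).1 (stateP M g₀ hbdd n).2).choose_spec.1

lemma stateP_new (g₀ : ℤ) (hbdd : ∀ t : ℤ, t < g₀ → ∀ v : M.obj t, v = 0) (n : ℕ) :
    ∀ g ∈ (stateP M g₀ hbdd (n+1)).1, g ∉ (stateP M g₀ hbdd n).1 → g.1 = (g₀ - 1 + n) + 1 :=
  (inv_step M (g₀ - 1 + n) (stateP M g₀ hbdd n).1 (stateP M g₀ hbdd n).2).choose_spec.2.2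

lemma stateP_mono (g₀ : ℤ) (hbdd : ∀ t : ℤ, t < g₀ → ∀ v : M.obj t, v = 0)
    {m n : ℕ} (h : m ≤ n) : (stateP M g₀ hbdd m).1 ⊆ (stateP M g₀ hbdd n).1 := by
  induction h with
  | refl => exact subset_rfl
  | step _ ih => exact ih.trans (stateP_subset M g₀ hbdd _)

lemma exists_good_generators (g₀ : ℤ)
    (hbdd : ∀ t : ℤ, t < g₀ → ∀ v : M.obj t, v = 0) :
    ∃ Gtot : Set (Gen M),
      (∀ t : ℤ, ∀ c : Gen M →₀ K, ↑c.support ⊆ alive M Gtot t → lc M t c = 0 → c = 0) ∧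
      (∀ t : ℤ, ∀ x : M.obj t, ∃ c : Gen M →₀ K,
        ↑c.support ⊆ alive M Gtot t ∧ lc M t c = x) := by
  set Gtot : Set (Gen M) := ⋃ n : ℕ, (stateP M g₀ hbdd n).1 with hGtot
  -- elements outside a given stage have late birth
  have hlate : ∀ (n m : ℕ), ∀ g ∈ (stateP M g₀ hbdd m).1,
      g ∉ (stateP M g₀ hbdd n).1 → (g₀ - 1 + n : ℤ) < g.1 := by
    intro n m
    induction m with
    | zero => intro g hg _; exact absurd hg (Set.notMem_empty g)
    | succ m ih =>
      intro g hg hgn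
      by_cases hgm : g ∈ (stateP M g₀ hbdd m).1
      · exact ih g hgm hgn
      · have hb := stateP_new M g₀ hbdd m g hg hgm
        rcases le_or_gt (m+1) n with h | h
        · exact absurd (stateP_mono M g₀ hbdd h hg) hgn
        · have : (n : ℤ) ≤ (m : ℤ) := by exact_mod_cast Nat.lt_succ_iff.mp h
          omega
  have halive : ∀ t : ℤ, alive M Gtot t = alive M (stateP M g₀ hbdd (t - (g₀ - 1)).toNat).1 t := by
    intro t
    set n := (t - (g₀ - 1)).toNat with hn
    have htn : t ≤ g₀ - 1 + n := by
      rw [hn]; omega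
    ext g
    constructor
    · rintro ⟨hgG, hgb, hgd⟩
      obtain ⟨s, ⟨m, rfl⟩, hgm⟩ := hgG
      by_cases hgn : g ∈ (stateP M g₀ hbdd n).1
      · exact ⟨hgn, hgb, hgd⟩
      · exact absurd hgb (by have := hlate n m g hgm hgn; omega)
    · rintro ⟨hgG, hgb, hgd⟩
      exact ⟨Set.mem_iUnion.mpr ⟨n, hgG⟩, hgb, hgd⟩
  refine ⟨Gtot, ?_, ?_⟩
  · intro t c hc h0
    set n := (t - (g₀ - 1)).toNat with hn
    have htn : t ≤ g₀ - 1 + n := by rw [hn]; omega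
    rw [halive t] at hc
    exact (stateP M g₀ hbdd n).2.indep t htn c hc h0
  · intro t x
    set n := (t - (g₀ - 1)).toNat with hn
    have htn : t ≤ g₀ - 1 + n := by rw [hn]; omega
    obtain ⟨c, hc, hlc⟩ := (stateP M g₀ hbdd n).2.spans t htn x
    exact ⟨c, by rw [halive t]; exact hc, hlc⟩

end

end PMDecomp
namespace PMDecomp

open CategoryTheory CategoryTheory.Limits Classical

noncomputable section

variable {K : Type} [Field K] (M : ℤ ⥤ ModuleCat.{0} K)

section BasisPart

variable (Gtot : Set (Gen M))

def aliveFam (t : ℤ) : alive M Gtot t → M.obj t := fun g => pushTo M t g.1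

lemma aliveFam_indep
    (hindep : ∀ t : ℤ, ∀ c : Gen M →₀ K, ↑c.support ⊆ alive M Gtot t → lc M t c = 0 → c = 0)
    (t : ℤ) : LinearIndependent K (aliveFam M Gtot t) := by
  rw [linearIndependent_iff]
  intro l hl
  set e : alive M Gtot t ↪ Gen M := Function.Embedding.subtype _ with he
  set c : Gen M →₀ K := Finsupp.embDomain e l with hc
  have hcsupp : ↑c.support ⊆ alive M Gtot t := by
    intro g hg
    rw [hc, Finsupp.support_embDomain] at hg
    obtain ⟨a, _, rfl⟩ := Finset.mem_map.mp (Finset.mem_coe.mp hg)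
    exact a.2
  have hlc : lc M t c = 0 := by
    rw [lc_apply, hc, Finsupp.sum_embDomain]
    rw [← hl, Finsupp.linearCombination_apply]
    rfl
  have hc0 := hindep t c hcsupp hlc
  rw [hc, Finsupp.embDomain_eq_zero] at hc0
  exact hc0

lemma aliveFam_span
    (hspan : ∀ t : ℤ, ∀ x : M.obj t, ∃ c : Gen M →₀ K,
      ↑c.support ⊆ alive M Gtot t ∧ lc M t c = x)
    (t : ℤ) :
    ⊤ ≤ Submodule.span K (Set.range (aliveFam M Gtot t)) := by
  intro x _
  obtain ⟨c, hc, hlc⟩ := hspan t x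
  rw [← hlc, lc_apply]
  apply Submodule.sum_mem
  intro g hg
  apply Submodule.smul_mem
  apply Submodule.subset_span
  exact ⟨⟨g, hc hg⟩, rfl⟩

def aliveBasis
    (hindep : ∀ t : ℤ, ∀ c : Gen M →₀ K, ↑c.support ⊆ alive M Gtot t → lc M t c = 0 → c = 0)
    (hspan : ∀ t : ℤ, ∀ x : M.obj t, ∃ c : Gen M →₀ K,
      ↑c.support ⊆ alive M Gtot t ∧ lc M t c = x)
    (t : ℤ) : Module.Basis (alive M Gtot t) K (M.obj t) :=
  Module.Basis.mk (aliveFam_indep M Gtot hindep t) (aliveFam_span M Gtot hspan t)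

lemma aliveBasis_apply
    (hindep : ∀ t : ℤ, ∀ c : Gen M →₀ K, ↑c.support ⊆ alive M Gtot t → lc M t c = 0 → c = 0)
    (hspan : ∀ t : ℤ, ∀ x : M.obj t, ∃ c : Gen M →₀ K,
      ↑c.support ⊆ alive M Gtot t ∧ lc M t c = x)
    (t : ℤ) (a : alive M Gtot t) :
    aliveBasis M Gtot hindep hspan t a = pushTo M t a.1 :=
  Module.Basis.mk_apply _ _ _

end BasisPart

/-- component of the canonical map from the interval module of a generator into `M`. -/
def toMcomp (g : Gen M) (t : ℤ) :
    regionCarrier K {t : ℤ | g.1 ≤ t ∧ (t : WithTop ℤ) < gdeath M g} t →ₗ[K] M.obj t where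
  toFun := fun x => (x : K) • pushTo M t g
  map_add' := fun x y => by rw [Submodule.coe_add, add_smul]
  map_smul' := fun c x => by
    rw [RingHom.id_apply, SetLike.val_smul, smul_eq_mul, mul_smul]

lemma toMcomp_apply (g : Gen M) (t : ℤ)
    (x : regionCarrier K {t : ℤ | g.1 ≤ t ∧ (t : WithTop ℤ) < gdeath M g} t) :
    toMcomp M g t x = (x : K) • pushTo M t g := rfl

lemma toM_nat (g : Gen M) {s t : ℤ} (hst : s ≤ t)
    (x : regionCarrier K {t : ℤ | g.1 ≤ t ∧ (t : WithTop ℤ) < gdeath M g} s) :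
    toMcomp M g t (regionMap K {t : ℤ | g.1 ≤ t ∧ (t : WithTop ℤ) < gdeath M g} hst x)
      = φm M hst (toMcomp M g s x) := by
  rw [toMcomp_apply, toMcomp_apply, regionMap_apply_coe, map_smul]
  by_cases h : Set.Icc s t ⊆ {t : ℤ | g.1 ≤ t ∧ (t : WithTop ℤ) < gdeath M g}
  · rw [if_pos h]
    congr 1
    have hs : g.1 ≤ s := (h ⟨le_rfl, hst⟩).1
    rw [push_push M hst hs]
  · rw [if_neg h, zero_smul]
    by_cases hx : (x : K) = 0
    · rw [hx, zero_smul]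
    · have hsS : g.1 ≤ s ∧ (s : WithTop ℤ) < gdeath M g := by
        rcases x.2 with h0 | h0
        · exact absurd h0 hx
        · exact h0
      obtain ⟨u, huIcc, huS⟩ := Set.not_subset.mp h
      have hdu : gdeath M g ≤ (u : WithTop ℤ) := by
        by_contra hlt
        exact huS ⟨hsS.1.trans huIcc.1, not_le.mp hlt⟩
      have hzero : pushTo M t g = 0 := by
        apply pushTo_eq_zero_of_death_le
        exact hdu.trans (WithTop.coe_le_coe.mpr huIcc.2)
      rw [push_push M hst hsS.1, hzero, smul_zero]

/-- the canonical map from the interval module of a generator into `M`. -/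
def toM (g : Gen M) :
    Region K {t : ℤ | g.1 ≤ t ∧ (t : WithTop ℤ) < gdeath M g} ⟶ M where
  app t := ModuleCat.ofHom (toMcomp M g t)
  naturality := by
    intro s t f
    have hst : s ≤ t := leOfHom f
    have hf : f = homOfLE hst := Subsingleton.elim _ _
    subst hf
    apply ModuleCat.hom_ext
    apply LinearMap.ext
    intro x
    exact toM_nat M g hst x

lemma toM_apply (g : Gen M) (t : ℤ)
    (x : regionCarrier K {t : ℤ | g.1 ≤ t ∧ (t : WithTop ℤ) < gdeath M g} t) :
    (toM M g).app t x = (x : K) • pushTo M t g := rfl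

end

end PMDecomp
/-- every persistence module over ℤ that is bounded below decomposes as
a coproduct of interval modules `Region {t | α_j ≤ t < β_j}` with `β_j` possibly `∞`. -/
theorem boundedBelow_interval_decomposition
    (K : Type) [Field K] (M : ℤ ⥤ ModuleCat.{0} K)
    (hbdd : ∃ g₀ : ℤ, ∀ t : ℤ, t < g₀ → ∀ v : M.obj t, v = 0) :
    ∃ (J : Type) (α : J → ℤ) (β : J → WithTop ℤ),
      (∀ j : J, (α j : WithTop ℤ) < β j) ∧
        Nonempty (M ≅ ∐ fun j : J =>
          Region K {t : ℤ | α j ≤ t ∧ (t : WithTop ℤ) < β j}) := by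
  classical
  obtain ⟨g₀, hbdd⟩ := hbdd
  obtain ⟨Gtot, hindep, hspan⟩ := PMDecomp.exists_good_generators M g₀ hbdd
  refine ⟨{g : PMDecomp.Gen M // g ∈ Gtot}, fun j => j.1.1,
    fun j => PMDecomp.gdeath M j.1,
    fun j => PMDecomp.death_gt M j.1.1 j.1.2, ?_⟩
  set J := {g : PMDecomp.Gen M // g ∈ Gtot} with hJ
  set f : J → (ℤ ⥤ ModuleCat.{0} K) :=
    fun j => Region K {t : ℤ | j.1.1 ≤ t ∧ (t : WithTop ℤ) < PMDecomp.gdeath M j.1} with hf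
  let c : Cofan f := Cofan.mk M (fun j => PMDecomp.toM M j.1)
  have hpt : ∀ t : ℤ, IsColimit (((evaluation ℤ (ModuleCat.{0} K)).obj t).mapCocone c) := by
    intro t
    set bas := PMDecomp.aliveBasis M Gtot hindep hspan t with hbas
    -- the index map from alive generators to J
    refine
      { desc := fun s => ModuleCat.ofHom (bas.constr K (fun a =>
          s.ι.app ⟨(⟨a.1, a.2.1⟩ : J)⟩ ⟨(1 : K), Or.inr ⟨a.2.2.1, a.2.2.2⟩⟩))
        fac := ?_
        uniq := ?_ }
    · rintro s ⟨j⟩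
      apply ModuleCat.hom_ext
      apply LinearMap.ext
      intro x
      show (bas.constr K (fun a =>
          s.ι.app ⟨(⟨a.1, a.2.1⟩ : J)⟩ ⟨(1 : K), Or.inr ⟨a.2.2.1, a.2.2.2⟩⟩))
          (PMDecomp.toMcomp M j.1 t x) = s.ι.app ⟨j⟩ x
      by_cases ht : j.1.1 ≤ t ∧ (t : WithTop ℤ) < PMDecomp.gdeath M j.1
      · set a : PMDecomp.alive M Gtot t := ⟨j.1, j.2, ht.1, ht.2⟩ with ha
        have hpb : PMDecomp.pushTo M t j.1 = bas a := by
          rw [hbas, PMDecomp.aliveBasis_apply]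
        erw [PMDecomp.toMcomp_apply, hpb, map_smul, Module.Basis.constr_basis]
        have hIdx : (s.ι.app ⟨(⟨a.1, a.2.1⟩ : J)⟩) = (s.ι.app ⟨j⟩) := rfl
        erw [hIdx, ← map_smul]
        congr 1
        apply Subtype.ext
        erw [SetLike.val_smul, smul_eq_mul, mul_one]
      · have hx0 : x = 0 := by
          apply Subtype.ext
          rcases x.2 with h0 | h0
          · exact h0
          · exact absurd h0 ht
        erw [hx0, map_zero, map_zero, map_zero]
    · intro s m hm
      apply ModuleCat.hom_ext
      apply Module.Basis.ext bas
      intro a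
      have hj := hm ⟨(⟨a.1, a.2.1⟩ : J)⟩
      have hone : bas a = PMDecomp.toMcomp M a.1 t ⟨(1 : K), Or.inr ⟨a.2.2.1, a.2.2.2⟩⟩ := by
        rw [PMDecomp.toMcomp_apply, one_smul, hbas, PMDecomp.aliveBasis_apply]
      rw [ModuleCat.hom_ofHom, Module.Basis.constr_basis, hone]
      exact LinearMap.congr_fun (congrArg ModuleCat.Hom.hom hj)
        (⟨(1 : K), Or.inr ⟨a.2.2.1, a.2.2.2⟩⟩ :
          regionCarrier K {u : ℤ | a.1.1 ≤ u ∧ (u : WithTop ℤ) < PMDecomp.gdeath M a.1} t)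
  let hc : IsColimit c := evaluationJointlyReflectsColimits c hpt
  exact ⟨hc.coconePointUniqueUpToIso (colimit.isColimit _)⟩
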